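/- Let d ≥ 1 and let q satisfy 2d/3 < q < d, and define S̄ := sup_{x,y∈ℤ^d} ∑_{u,v∈ℤ^d} (|u−v|+1)^{−q}(|y−u|+1)^{−q}(|x−v|+1)^{−q}, which is finite. Define H(z,w,x,y) := ∑_{u,v∈ℤ^d} (|z−u|+1)^{−q}(|y−u|+1)^{−q}(|w−v|+1)^{−q}(|x−v|+1)^{−q}(|u−v|+1)^{−q}. Then there is a constant C depending only on d and q such that for all z, w, x, y ∈ ℤ^d, H(z,w,x,y) ≤ C S̄ (|y−z|+1)^{−q}(|x−w|+1)^{−q}. -/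

import Mathlib

open scoped BigOperators ENNReal

/-- Points of `ℤ^d`. -/
abbrev V (d : ℕ) := Fin d → ℤ

/-- The Euclidean norm of a point of `ℤ^d`. -/
noncomputable def znorm {d : ℕ} (x : V d) : ℝ :=
  Real.sqrt (∑ i, ((x i : ℝ)) ^ 2)

/-- The weight `|x| + 1`, as an extended nonnegative real. -/
noncomputable def w {d : ℕ} (x : V d) : ℝ≥0∞ := ENNReal.ofReal (znorm x + 1)

/-- `S̄ = sup_{x,y} ∑_{u,v} (|u−v|+1)^{−q} (|y−u|+1)^{−q} (|x−v|+1)^{−q}`. -/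
noncomputable def Sbar (d : ℕ) (q : ℝ) : ℝ≥0∞ :=
  ⨆ p : V d × V d, ∑' uv : V d × V d,
    w (uv.1 - uv.2) ^ (-q) * w (p.2 - uv.1) ^ (-q) * w (p.1 - uv.2) ^ (-q)

/-- The quantity `H(z,w,x,y)` of Remark 4.2. -/
noncomputable def Hdiag (d : ℕ) (q : ℝ) (z ww x y : V d) : ℝ≥0∞ :=
  ∑' uv : V d × V d,
    w (z - uv.1) ^ (-q) * w (y - uv.1) ^ (-q) * w (ww - uv.2) ^ (-q) *
      w (x - uv.2) ^ (-q) * w (uv.1 - uv.2) ^ (-q)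

namespace Stmt8Aux

variable {d : ℕ}

lemma znorm_nonneg (x : V d) : 0 ≤ znorm x := Real.sqrt_nonneg _

lemma znorm_pos1 (x : V d) : (0:ℝ) < znorm x + 1 := by linarith [znorm_nonneg x]

lemma abs_le_znorm (x : V d) (i : Fin d) : |(x i : ℝ)| ≤ znorm x := by
  have h : ((x i : ℝ)) ^ 2 ≤ ∑ j, ((x j : ℝ)) ^ 2 :=
    Finset.single_le_sum (f := fun j => ((x j : ℝ)) ^ 2) (fun j _ => sq_nonneg _)
      (Finset.mem_univ i)
  calc |(x i : ℝ)| = Real.sqrt (((x i : ℝ)) ^ 2) := (Real.sqrt_sq_eq_abs _).symm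
    _ ≤ znorm x := Real.sqrt_le_sqrt h

lemma znorm_neg (x : V d) : znorm (-x) = znorm x := by
  unfold znorm
  congr 1
  refine Finset.sum_congr rfl fun i _ => ?_
  have : ((-x) i : ℝ) = -((x i : ℝ)) := by rw [Pi.neg_apply]; push_cast; ring
  rw [this]; ring

lemma znorm_eq_norm (x : V d) :
    znorm x = ‖(show EuclideanSpace ℝ (Fin d) from WithLp.toLp 2 fun i => (x i : ℝ))‖ := by
  rw [EuclideanSpace.norm_eq]
  unfold znorm
  congr 1
  refine Finset.sum_congr rfl fun i _ => ?_
  rw [Real.norm_eq_abs, sq_abs]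

lemma znorm_add_le (a b : V d) : znorm (a + b) ≤ znorm a + znorm b := by
  rw [znorm_eq_norm, znorm_eq_norm, znorm_eq_norm]
  have h : (show EuclideanSpace ℝ (Fin d) from WithLp.toLp 2 fun i => ((a + b) i : ℝ)) =
      (show EuclideanSpace ℝ (Fin d) from WithLp.toLp 2 fun i => (a i : ℝ)) +
      (show EuclideanSpace ℝ (Fin d) from WithLp.toLp 2 fun i => (b i : ℝ)) := by
    ext i
    show (((a + b) i : ℤ) : ℝ) = (a i : ℝ) + (b i : ℝ)
    push_cast [Pi.add_apply]
    ring
  rw [h]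
  exact norm_add_le _ _

lemma w_rpow (t : ℝ) (x : V d) : w x ^ (-t) = ENNReal.ofReal ((znorm x + 1) ^ (-t)) :=
  ENNReal.ofReal_rpow_of_pos (znorm_pos1 x)

/-- one-dimensional summability -/
lemma summable_int_rpow {t : ℝ} (ht : 1 < t) :
    Summable (fun m : ℤ => (|(m : ℝ)| + 1) ^ (-t)) := by
  have hnat : Summable (fun n : ℕ => ((n : ℝ) + 1) ^ (-t)) := by
    have h := (Real.summable_one_div_nat_add_rpow 1 t).mpr ht
    refine h.congr fun n => ?_
    rw [one_div, ← Real.rpow_neg (abs_nonneg _), abs_of_pos (by positivity)]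
  refine Summable.of_nat_of_neg (hnat.congr fun n => ?_) (hnat.congr fun n => ?_)
  · rw [show |((n : ℤ) : ℝ)| = (n : ℝ) by rw [Int.cast_natCast, abs_of_nonneg (by positivity)]]
  · rw [show |((-(n : ℤ) : ℤ) : ℝ)| = (n : ℝ) by push_cast; rw [abs_neg,
      abs_of_nonneg (by positivity)]]

lemma tsum_int_ne_top {t : ℝ} (ht : 1 < t) :
    (∑' m : ℤ, ENNReal.ofReal ((|(m : ℝ)| + 1) ^ (-t))) ≠ ⊤ := by
  rw [← ENNReal.ofReal_tsum_of_nonneg (fun m => by positivity) (summable_int_rpow ht)]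
  exact ENNReal.ofReal_ne_top

lemma tsum_pi_prod (g : ℤ → ℝ≥0∞) :
    ∀ n : ℕ, (∑' x : Fin n → ℤ, ∏ i, g (x i)) = (∑' m : ℤ, g m) ^ n := by
  intro n
  induction n with
  | zero =>
      rw [pow_zero]
      have : ∀ x : Fin 0 → ℤ, (∏ i, g (x i)) = 1 := fun x => by simp
      simp only [this]
      exact tsum_eq_single (fun i => i.elim0) (fun b hb => absurd (Subsingleton.elim b _) hb)
  | succ n ih =>
      have he := (Fin.consEquiv (fun _ : Fin (n+1) => ℤ)).tsum_eq
        (fun x : Fin (n+1) → ℤ => ∏ i, g (x i))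
      rw [← he, ENNReal.tsum_prod']
      have hpt : ∀ (a : ℤ) (y : Fin n → ℤ),
          (∏ i, g ((Fin.consEquiv (fun _ : Fin (n+1) => ℤ)) (a, y) i)) =
            g a * ∏ i, g (y i) := by
        intro a y
        rw [Fin.prod_univ_succ]
        simp [Fin.consEquiv]
      simp only [hpt]
      rw [pow_succ]
      calc (∑' a : ℤ, ∑' y : Fin n → ℤ, g a * ∏ i, g (y i))
          = ∑' a : ℤ, g a * ∑' y : Fin n → ℤ, ∏ i, g (y i) := by
            refine tsum_congr fun a => ?_
            exact ENNReal.tsum_mul_left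
        _ = (∑' y : Fin n → ℤ, ∏ i, g (y i)) * ∑' a : ℤ, g a := by
            rw [ENNReal.tsum_mul_right]; ring
        _ = (∑' m : ℤ, g m) ^ n * ∑' m : ℤ, g m := by rw [ih]

lemma tsum_w_ne_top (hd : 1 ≤ d) {r : ℝ} (hr : (d : ℝ) < r) :
    (∑' x : V d, w x ^ (-r)) ≠ ⊤ := by
  have hd0 : (0:ℝ) < d := by exact_mod_cast hd
  have ht : 1 < r / d := (one_lt_div hd0).mpr hr
  set g : ℤ → ℝ≥0∞ := fun m => ENNReal.ofReal ((|(m : ℝ)| + 1) ^ (-(r / d))) with hg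
  have hpt : ∀ x : V d, w x ^ (-r) ≤ ∏ i, g (x i) := by
    intro x
    rw [w_rpow]
    have h1 : ∀ i, (0:ℝ) < |(x i : ℝ)| + 1 := fun i => by positivity
    have hprod : (∏ i, (|(x i : ℝ)| + 1)) ≤ (znorm x + 1) ^ d := by
      calc (∏ i, (|(x i : ℝ)| + 1)) ≤ ∏ _i : Fin d, (znorm x + 1) :=
            Finset.prod_le_prod (fun i _ => (h1 i).le)
              (fun i _ => by linarith [abs_le_znorm x i])
        _ = (znorm x + 1) ^ d := by
            rw [Finset.prod_const, Finset.card_univ, Fintype.card_fin]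
    have hrd : (0:ℝ) ≤ r / d := by positivity
    have h2 : (∏ i, (|(x i : ℝ)| + 1)) ^ (r / d) ≤ ((znorm x + 1) ^ d) ^ (r / d) :=
      Real.rpow_le_rpow (Finset.prod_nonneg fun i _ => (h1 i).le) hprod hrd
    have h3 : ((znorm x + 1) ^ d) ^ (r / d) = (znorm x + 1) ^ r := by
      rw [← Real.rpow_natCast (znorm x + 1) d, ← Real.rpow_mul (znorm_pos1 x).le]
      congr 1
      field_simp
    have h4 : (∏ i, (|(x i : ℝ)| + 1) ^ (r / d)) = (∏ i, (|(x i : ℝ)| + 1)) ^ (r / d) :=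
      Real.finset_prod_rpow _ _ (fun i _ => (h1 i).le) _
    have hreal : (znorm x + 1) ^ (-r) ≤ ∏ i, (|(x i : ℝ)| + 1) ^ (-(r / d)) := by
      have h5 : (0:ℝ) < ∏ i, (|(x i : ℝ)| + 1) := Finset.prod_pos fun i _ => h1 i
      have h6 : (∏ i, (|(x i : ℝ)| + 1) ^ (-(r / d))) =
          ((∏ i, (|(x i : ℝ)| + 1)) ^ (r / d))⁻¹ := by
        rw [← h4, ← Finset.prod_inv_distrib]
        exact Finset.prod_congr rfl fun i _ => Real.rpow_neg (h1 i).le _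
      rw [h6, Real.rpow_neg (znorm_pos1 x).le]
      have h7 : (∏ i, (|(x i : ℝ)| + 1)) ^ (r / d) ≤ (znorm x + 1) ^ r := h2.trans_eq h3
      exact inv_anti₀ (by positivity) h7
    calc ENNReal.ofReal ((znorm x + 1) ^ (-r))
        ≤ ENNReal.ofReal (∏ i, (|(x i : ℝ)| + 1) ^ (-(r / d))) :=
          ENNReal.ofReal_le_ofReal hreal
      _ = ∏ i, g (x i) := ENNReal.ofReal_prod_of_nonneg fun i _ => by positivity
  have hle := ENNReal.tsum_le_tsum hpt
  rw [tsum_pi_prod g d] at hle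
  exact ne_top_of_le_ne_top (ENNReal.pow_ne_top (tsum_int_ne_top ht)) hle

lemma tsum_w_sub_left (a : V d) (t : ℝ) :
    (∑' u : V d, w (a - u) ^ (-t)) = ∑' u : V d, w u ^ (-t) :=
  (Equiv.subLeft a).tsum_eq (fun u => w u ^ (-t))

lemma tsum_w_sub_right (v : V d) (t : ℝ) :
    (∑' u : V d, w (u - v) ^ (-t)) = ∑' u : V d, w u ^ (-t) :=
  (Equiv.subRight v).tsum_eq (fun u => w u ^ (-t))

/-! ### The three-factor pointwise inequality -/

lemma min3_aux {q X Y Z W : ℝ} (hq : 0 < q) (hX : 1 ≤ X) (hY : 1 ≤ Y) (hZ : 1 ≤ Z)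
    (h1 : X ≤ Y) (h2 : X ≤ Z) (hW : W = X * Y * Z) :
    W ^ (-(q / 2)) ≤ X ^ (-(3 * q / 2)) := by
  have hX0 : (0:ℝ) < X := by linarith
  have h3 : X ^ (3:ℕ) ≤ W := by
    rw [hW]
    have hYZ : X * X ≤ Y * Z := mul_le_mul h1 h2 (by linarith) (by linarith)
    calc X ^ (3:ℕ) = X * (X * X) := by ring
      _ ≤ X * (Y * Z) := mul_le_mul_of_nonneg_left hYZ hX0.le
      _ = X * Y * Z := by ring
  have h4 : (X ^ (3:ℕ)) ^ (q / 2) ≤ W ^ (q / 2) :=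
    Real.rpow_le_rpow (by positivity) h3 (by positivity)
  have h5 : (X ^ (3:ℕ)) ^ (q / 2) = X ^ (3 * q / 2) := by
    rw [← Real.rpow_natCast X 3, ← Real.rpow_mul hX0.le]
    congr 1; push_cast; ring
  have hW0 : (0:ℝ) < W := by rw [hW]; positivity
  rw [Real.rpow_neg hW0.le, Real.rpow_neg hX0.le, ← h5]
  exact inv_anti₀ (by positivity) h4

lemma real_tri {q P Q R : ℝ} (hq : 0 < q) (hP : 1 ≤ P) (hQ : 1 ≤ Q) (hR : 1 ≤ R) :
    (P * Q * R) ^ (-q) ≤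
      (P * Q) ^ (-(3 * q / 2)) + (Q * R) ^ (-(3 * q / 2)) + (R * P) ^ (-(3 * q / 2)) := by
  have hPQ : 1 ≤ P * Q := by nlinarith
  have hQR : 1 ≤ Q * R := by nlinarith
  have hRP : 1 ≤ R * P := by nlinarith
  have key : (P * Q * R) ^ (-q) = ((P * Q) * (Q * R) * (R * P)) ^ (-(q / 2)) := by
    rw [show (P * Q) * (Q * R) * (R * P) = (P * Q * R) ^ (2:ℕ) by ring,
      ← Real.rpow_natCast (P * Q * R) 2, ← Real.rpow_mul (by positivity)]
    congr 1; push_cast; ring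
  have n1 : (0:ℝ) ≤ (P * Q) ^ (-(3 * q / 2)) := Real.rpow_nonneg (by positivity) _
  have n2 : (0:ℝ) ≤ (Q * R) ^ (-(3 * q / 2)) := Real.rpow_nonneg (by positivity) _
  have n3 : (0:ℝ) ≤ (R * P) ^ (-(3 * q / 2)) := Real.rpow_nonneg (by positivity) _
  rw [key]
  rcases le_total (P * Q) (Q * R) with h1 | h1
  · rcases le_total (P * Q) (R * P) with h2 | h2
    · have := min3_aux hq hPQ hQR hRP h1 h2 rfl
      linarith
    · have := min3_aux (W := P * Q * (Q * R) * (R * P)) hq hRP hPQ hQR h2 (h2.trans h1)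
        (by ring)
      linarith
  · rcases le_total (Q * R) (R * P) with h2 | h2
    · have := min3_aux (W := P * Q * (Q * R) * (R * P)) hq hQR hRP hPQ h2 h1 (by ring)
      linarith
    · have := min3_aux (W := P * Q * (Q * R) * (R * P)) hq hRP hPQ hQR (h2.trans h1) h2
        (by ring)
      linarith

lemma w_mul3 {q : ℝ} (hq : 0 < q) (p1 p2 p3 : V d) :
    w p1 ^ (-q) * w p2 ^ (-q) * w p3 ^ (-q) ≤
      w p1 ^ (-(3 * q / 2)) * w p2 ^ (-(3 * q / 2)) +
      w p2 ^ (-(3 * q / 2)) * w p3 ^ (-(3 * q / 2)) +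
      w p3 ^ (-(3 * q / 2)) * w p1 ^ (-(3 * q / 2)) := by
  set P := znorm p1 + 1 with hPdef
  set Q := znorm p2 + 1 with hQdef
  set R := znorm p3 + 1 with hRdef
  have hP : 1 ≤ P := by have := znorm_nonneg p1; simp [hPdef]; linarith
  have hQ : 1 ≤ Q := by have := znorm_nonneg p2; simp [hQdef]; linarith
  have hR : 1 ≤ R := by have := znorm_nonneg p3; simp [hRdef]; linarith
  have hP0 : (0:ℝ) < P := by linarith
  have hQ0 : (0:ℝ) < Q := by linarith
  have hR0 : (0:ℝ) < R := by linarith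
  have pair : ∀ a b : ℝ, 0 < a → 0 < b →
      ENNReal.ofReal (a ^ (-(3*q/2))) * ENNReal.ofReal (b ^ (-(3*q/2))) =
        ENNReal.ofReal ((a * b) ^ (-(3*q/2))) := by
    intro a b ha hb
    rw [Real.mul_rpow ha.le hb.le, ENNReal.ofReal_mul (by positivity)]
  have nP : (0:ℝ) ≤ P ^ (-q) := Real.rpow_nonneg hP0.le _
  have nQ : (0:ℝ) ≤ Q ^ (-q) := Real.rpow_nonneg hQ0.le _
  have nPQ : (0:ℝ) ≤ (P * Q) ^ (-(3*q/2)) := Real.rpow_nonneg (by positivity) _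
  have nQR : (0:ℝ) ≤ (Q * R) ^ (-(3*q/2)) := Real.rpow_nonneg (by positivity) _
  rw [w_rpow, w_rpow, w_rpow, w_rpow, w_rpow, w_rpow, ← hPdef, ← hQdef, ← hRdef]
  rw [pair P Q hP0 hQ0, pair Q R hQ0 hR0, pair R P hR0 hP0]
  rw [← ENNReal.ofReal_mul nP, ← ENNReal.ofReal_mul (mul_nonneg nP nQ)]
  rw [← ENNReal.ofReal_add nPQ nQR, ← ENNReal.ofReal_add (add_nonneg nPQ nQR)
    (Real.rpow_nonneg (by positivity) _)]
  apply ENNReal.ofReal_le_ofReal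
  calc P ^ (-q) * Q ^ (-q) * R ^ (-q) = (P * Q * R) ^ (-q) := by
        rw [Real.mul_rpow (by positivity) hR0.le, Real.mul_rpow hP0.le hQ0.le]
    _ ≤ _ := real_tri hq hP hQ hR

/-! ### The two-factor (triangle) pointwise inequality -/

lemma real_pair_aux {q A B D : ℝ} (hq : 0 ≤ q) (hA : 0 ≤ A) (hB : 0 ≤ B) (hD : 0 ≤ D)
    (hle : D ≤ A + B) (hAB : A ≤ B) :
    (A + 1) ^ (-q) * (B + 1) ^ (-q) ≤ 2 ^ q * ((D + 1) ^ (-q) * (A + 1) ^ (-q)) := by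
  have h1 : D + 1 ≤ 2 * (B + 1) := by linarith
  have h2 : (D + 1) ^ q ≤ (2 * (B + 1)) ^ q :=
    Real.rpow_le_rpow (by linarith) h1 hq
  have h3 : (2 * (B + 1)) ^ q = 2 ^ q * (B + 1) ^ q :=
    Real.mul_rpow (by norm_num) (by linarith)
  have h4 : (D + 1) ^ q / 2 ^ q ≤ (B + 1) ^ q := by
    rw [div_le_iff₀ (by positivity)]
    calc (D + 1) ^ q ≤ 2 ^ q * (B + 1) ^ q := h2.trans_eq h3
      _ = (B + 1) ^ q * 2 ^ q := by ring
  have hgoal : (B + 1) ^ (-q) ≤ 2 ^ q * (D + 1) ^ (-q) := by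
    calc (B + 1) ^ (-q) = 1 / (B + 1) ^ q := by
          rw [Real.rpow_neg (by linarith), one_div]
      _ ≤ 1 / ((D + 1) ^ q / 2 ^ q) := one_div_le_one_div_of_le (by positivity) h4
      _ = 2 ^ q * (D + 1) ^ (-q) := by
          rw [Real.rpow_neg (by linarith)]
          field_simp
  calc (A + 1) ^ (-q) * (B + 1) ^ (-q) ≤ (A + 1) ^ (-q) * (2 ^ q * (D + 1) ^ (-q)) :=
        mul_le_mul_of_nonneg_left hgoal (Real.rpow_nonneg (by linarith) _)
    _ = 2 ^ q * ((D + 1) ^ (-q) * (A + 1) ^ (-q)) := by ring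

lemma real_pair {q A B D : ℝ} (hq : 0 ≤ q) (hA : 0 ≤ A) (hB : 0 ≤ B) (hD : 0 ≤ D)
    (hle : D ≤ A + B) :
    (A + 1) ^ (-q) * (B + 1) ^ (-q) ≤
      2 ^ q * ((D + 1) ^ (-q) * ((A + 1) ^ (-q) + (B + 1) ^ (-q))) := by
  have nA : (0:ℝ) ≤ (A + 1) ^ (-q) := Real.rpow_nonneg (by linarith) _
  have nB : (0:ℝ) ≤ (B + 1) ^ (-q) := Real.rpow_nonneg (by linarith) _
  have nD : (0:ℝ) ≤ (D + 1) ^ (-q) := Real.rpow_nonneg (by linarith) _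
  have n2 : (0:ℝ) ≤ (2:ℝ) ^ q := Real.rpow_nonneg (by norm_num) _
  rcases le_total A B with h | h
  · have := real_pair_aux hq hA hB hD hle h
    nlinarith [mul_nonneg n2 (mul_nonneg nD nB)]
  · have := real_pair_aux hq hB hA hD (by linarith) h
    nlinarith [mul_nonneg n2 (mul_nonneg nD nA)]

lemma w_pair {q : ℝ} (hq : 0 ≤ q) (z y u : V d) :
    w (z - u) ^ (-q) * w (y - u) ^ (-q) ≤
      ENNReal.ofReal (2 ^ q) * w (y - z) ^ (-q) *
        (w (z - u) ^ (-q) + w (y - u) ^ (-q)) := by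
  have htri : znorm (y - z) ≤ znorm (z - u) + znorm (y - u) := by
    have h : y - z = (y - u) + -(z - u) := by abel
    calc znorm (y - z) = znorm ((y - u) + -(z - u)) := by rw [← h]
      _ ≤ znorm (y - u) + znorm (-(z - u)) := znorm_add_le _ _
      _ = znorm (z - u) + znorm (y - u) := by rw [znorm_neg]; ring
  have hr := real_pair (q := q) hq (znorm_nonneg (z - u)) (znorm_nonneg (y - u))
    (znorm_nonneg (y - z)) htri
  have nA : (0:ℝ) ≤ (znorm (z - u) + 1) ^ (-q) := Real.rpow_nonneg (znorm_pos1 _).le _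
  have nB : (0:ℝ) ≤ (znorm (y - u) + 1) ^ (-q) := Real.rpow_nonneg (znorm_pos1 _).le _
  have nD : (0:ℝ) ≤ (znorm (y - z) + 1) ^ (-q) := Real.rpow_nonneg (znorm_pos1 _).le _
  rw [w_rpow, w_rpow, w_rpow]
  calc ENNReal.ofReal ((znorm (z - u) + 1) ^ (-q)) *
        ENNReal.ofReal ((znorm (y - u) + 1) ^ (-q))
      = ENNReal.ofReal ((znorm (z - u) + 1) ^ (-q) * (znorm (y - u) + 1) ^ (-q)) := by
        rw [ENNReal.ofReal_mul nA]
    _ ≤ ENNReal.ofReal (2 ^ q * ((znorm (y - z) + 1) ^ (-q) *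
          ((znorm (z - u) + 1) ^ (-q) + (znorm (y - u) + 1) ^ (-q)))) :=
        ENNReal.ofReal_le_ofReal hr
    _ = ENNReal.ofReal (2 ^ q) * ENNReal.ofReal ((znorm (y - z) + 1) ^ (-q)) *
          (ENNReal.ofReal ((znorm (z - u) + 1) ^ (-q)) +
            ENNReal.ofReal ((znorm (y - u) + 1) ^ (-q))) := by
        rw [ENNReal.ofReal_mul (by positivity : (0:ℝ) ≤ 2 ^ q), ENNReal.ofReal_mul nD,
          ENNReal.ofReal_add nA nB, mul_assoc]

/-- Each chain sum is at most `Sbar`. -/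
lemma chain_le_Sbar (d : ℕ) (q : ℝ) (c e : V d) :
    (∑' uv : V d × V d,
        w (c - uv.1) ^ (-q) * w (e - uv.2) ^ (-q) * w (uv.1 - uv.2) ^ (-q)) ≤ Sbar d q := by
  have hcongr : (∑' uv : V d × V d,
      w (c - uv.1) ^ (-q) * w (e - uv.2) ^ (-q) * w (uv.1 - uv.2) ^ (-q)) =
      ∑' uv : V d × V d,
        w (uv.1 - uv.2) ^ (-q) * w (((e, c) : V d × V d).2 - uv.1) ^ (-q) *
          w (((e, c) : V d × V d).1 - uv.2) ^ (-q) := by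
    refine tsum_congr fun uv => ?_
    ring
  rw [hcongr]
  exact le_iSup (fun p : V d × V d => ∑' uv : V d × V d,
    w (uv.1 - uv.2) ^ (-q) * w (p.2 - uv.1) ^ (-q) * w (p.1 - uv.2) ^ (-q)) (e, c)

end Stmt8Aux

open Stmt8Aux

theorem stmt8 (d : ℕ) (hd : 1 ≤ d) (q : ℝ) (hql : 2 * (d : ℝ) / 3 < q)
    (hqu : q < (d : ℝ)) :
    Sbar d q ≠ ⊤ ∧
    ∃ C : ℝ, 0 < C ∧ ∀ z ww x y : V d,
      Hdiag d q z ww x y ≤ ENNReal.ofReal C * Sbar d q *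
        (w (y - z) ^ (-q) * w (x - ww) ^ (-q)) := by
  have hd0 : (0:ℝ) < d := by exact_mod_cast hd
  have hq0 : 0 < q := by linarith
  set s : ℝ := 3 * q / 2 with hs
  have hds : (d : ℝ) < s := by rw [hs]; linarith
  set Z : ℝ≥0∞ := ∑' x : V d, w x ^ (-s) with hZ
  have hZtop : Z ≠ ⊤ := tsum_w_ne_top hd hds
  -- Part 1 : Sbar is finite
  have hSbar : Sbar d q ≤ Z * Z + Z * Z + Z * Z := by
    refine iSup_le fun p => ?_
    have hpt : ∀ uv : V d × V d,
        w (uv.1 - uv.2) ^ (-q) * w (p.2 - uv.1) ^ (-q) * w (p.1 - uv.2) ^ (-q) ≤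
          w (uv.1 - uv.2) ^ (-s) * w (p.2 - uv.1) ^ (-s) +
          w (p.2 - uv.1) ^ (-s) * w (p.1 - uv.2) ^ (-s) +
          w (p.1 - uv.2) ^ (-s) * w (uv.1 - uv.2) ^ (-s) := fun uv =>
      w_mul3 hq0 (uv.1 - uv.2) (p.2 - uv.1) (p.1 - uv.2)
    calc (∑' uv : V d × V d,
          w (uv.1 - uv.2) ^ (-q) * w (p.2 - uv.1) ^ (-q) * w (p.1 - uv.2) ^ (-q))
        ≤ ∑' uv : V d × V d,
            (w (uv.1 - uv.2) ^ (-s) * w (p.2 - uv.1) ^ (-s) +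
             w (p.2 - uv.1) ^ (-s) * w (p.1 - uv.2) ^ (-s) +
             w (p.1 - uv.2) ^ (-s) * w (uv.1 - uv.2) ^ (-s)) := ENNReal.tsum_le_tsum hpt
      _ = (∑' uv : V d × V d, w (uv.1 - uv.2) ^ (-s) * w (p.2 - uv.1) ^ (-s)) +
          (∑' uv : V d × V d, w (p.2 - uv.1) ^ (-s) * w (p.1 - uv.2) ^ (-s)) +
          (∑' uv : V d × V d, w (p.1 - uv.2) ^ (-s) * w (uv.1 - uv.2) ^ (-s)) := by
          rw [ENNReal.tsum_add, ENNReal.tsum_add]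
      _ = Z * Z + Z * Z + Z * Z := by
          congr 1
          · congr 1
            · -- first term
              rw [ENNReal.tsum_prod']
              calc (∑' u : V d, ∑' v : V d, w (u - v) ^ (-s) * w (p.2 - u) ^ (-s))
                  = ∑' u : V d, (∑' v : V d, w (u - v) ^ (-s)) * w (p.2 - u) ^ (-s) := by
                    exact tsum_congr fun u => ENNReal.tsum_mul_right
                _ = ∑' u : V d, Z * w (p.2 - u) ^ (-s) := by
                    refine tsum_congr fun u => ?_
                    rw [tsum_w_sub_left u s]
                _ = Z * ∑' u : V d, w (p.2 - u) ^ (-s) := ENNReal.tsum_mul_left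
                _ = Z * Z := by rw [tsum_w_sub_left p.2 s]
            · -- second term
              rw [ENNReal.tsum_prod']
              calc (∑' u : V d, ∑' v : V d, w (p.2 - u) ^ (-s) * w (p.1 - v) ^ (-s))
                  = ∑' u : V d, w (p.2 - u) ^ (-s) * ∑' v : V d, w (p.1 - v) ^ (-s) := by
                    exact tsum_congr fun u => ENNReal.tsum_mul_left
                _ = ∑' u : V d, w (p.2 - u) ^ (-s) * Z := by
                    refine tsum_congr fun u => ?_
                    rw [tsum_w_sub_left p.1 s]
                _ = (∑' u : V d, w (p.2 - u) ^ (-s)) * Z := ENNReal.tsum_mul_right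
                _ = Z * Z := by rw [tsum_w_sub_left p.2 s]
          · -- third term
            rw [ENNReal.tsum_prod', ENNReal.tsum_comm]
            calc (∑' v : V d, ∑' u : V d, w (p.1 - v) ^ (-s) * w (u - v) ^ (-s))
                = ∑' v : V d, w (p.1 - v) ^ (-s) * ∑' u : V d, w (u - v) ^ (-s) := by
                  exact tsum_congr fun v => ENNReal.tsum_mul_left
              _ = ∑' v : V d, w (p.1 - v) ^ (-s) * Z := by
                  refine tsum_congr fun v => ?_
                  rw [tsum_w_sub_right v s]
              _ = (∑' v : V d, w (p.1 - v) ^ (-s)) * Z := ENNReal.tsum_mul_right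
              _ = Z * Z := by rw [tsum_w_sub_left p.1 s]
  have hSbar_ne : Sbar d q ≠ ⊤ := by
    have : Z * Z + Z * Z + Z * Z ≠ ⊤ := by
      have hZZ : Z * Z ≠ ⊤ := ENNReal.mul_ne_top hZtop hZtop
      exact ENNReal.add_ne_top.mpr ⟨ENNReal.add_ne_top.mpr ⟨hZZ, hZZ⟩, hZZ⟩
    exact ne_top_of_le_ne_top this hSbar
  refine ⟨hSbar_ne, 4 * 2 ^ q * 2 ^ q, by positivity, fun z ww x y => ?_⟩
  set K : ℝ≥0∞ := ENNReal.ofReal (2 ^ q) with hK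
  set W1 : ℝ≥0∞ := w (y - z) ^ (-q) with hW1
  set W2 : ℝ≥0∞ := w (x - ww) ^ (-q) with hW2
  have hpt : ∀ uv : V d × V d,
      w (z - uv.1) ^ (-q) * w (y - uv.1) ^ (-q) * w (ww - uv.2) ^ (-q) *
        w (x - uv.2) ^ (-q) * w (uv.1 - uv.2) ^ (-q) ≤
      K * W1 * K * W2 *
        (w (z - uv.1) ^ (-q) * w (ww - uv.2) ^ (-q) * w (uv.1 - uv.2) ^ (-q) +
         w (z - uv.1) ^ (-q) * w (x - uv.2) ^ (-q) * w (uv.1 - uv.2) ^ (-q) +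
         w (y - uv.1) ^ (-q) * w (ww - uv.2) ^ (-q) * w (uv.1 - uv.2) ^ (-q) +
         w (y - uv.1) ^ (-q) * w (x - uv.2) ^ (-q) * w (uv.1 - uv.2) ^ (-q)) := by
    intro uv
    have h1 := w_pair (d := d) hq0.le z y uv.1
    have h2 := w_pair (d := d) hq0.le ww x uv.2
    calc w (z - uv.1) ^ (-q) * w (y - uv.1) ^ (-q) * w (ww - uv.2) ^ (-q) *
          w (x - uv.2) ^ (-q) * w (uv.1 - uv.2) ^ (-q)
        = (w (z - uv.1) ^ (-q) * w (y - uv.1) ^ (-q)) *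
            (w (ww - uv.2) ^ (-q) * w (x - uv.2) ^ (-q)) * w (uv.1 - uv.2) ^ (-q) := by
          ring
      _ ≤ (K * W1 * (w (z - uv.1) ^ (-q) + w (y - uv.1) ^ (-q))) *
            (K * W2 * (w (ww - uv.2) ^ (-q) + w (x - uv.2) ^ (-q))) *
            w (uv.1 - uv.2) ^ (-q) := by
          exact mul_le_mul' (mul_le_mul' h1 h2) le_rfl
      _ = K * W1 * K * W2 *
            (w (z - uv.1) ^ (-q) * w (ww - uv.2) ^ (-q) * w (uv.1 - uv.2) ^ (-q) +
             w (z - uv.1) ^ (-q) * w (x - uv.2) ^ (-q) * w (uv.1 - uv.2) ^ (-q) +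
             w (y - uv.1) ^ (-q) * w (ww - uv.2) ^ (-q) * w (uv.1 - uv.2) ^ (-q) +
             w (y - uv.1) ^ (-q) * w (x - uv.2) ^ (-q) * w (uv.1 - uv.2) ^ (-q)) := by
          ring
  have hmain : Hdiag d q z ww x y ≤ K * W1 * K * W2 * (4 * Sbar d q) := by
    calc Hdiag d q z ww x y
        ≤ ∑' uv : V d × V d, K * W1 * K * W2 *
            (w (z - uv.1) ^ (-q) * w (ww - uv.2) ^ (-q) * w (uv.1 - uv.2) ^ (-q) +
             w (z - uv.1) ^ (-q) * w (x - uv.2) ^ (-q) * w (uv.1 - uv.2) ^ (-q) +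
             w (y - uv.1) ^ (-q) * w (ww - uv.2) ^ (-q) * w (uv.1 - uv.2) ^ (-q) +
             w (y - uv.1) ^ (-q) * w (x - uv.2) ^ (-q) * w (uv.1 - uv.2) ^ (-q)) :=
          ENNReal.tsum_le_tsum hpt
      _ = K * W1 * K * W2 *
            ((∑' uv : V d × V d,
                w (z - uv.1) ^ (-q) * w (ww - uv.2) ^ (-q) * w (uv.1 - uv.2) ^ (-q)) +
             (∑' uv : V d × V d,
                w (z - uv.1) ^ (-q) * w (x - uv.2) ^ (-q) * w (uv.1 - uv.2) ^ (-q)) +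
             (∑' uv : V d × V d,
                w (y - uv.1) ^ (-q) * w (ww - uv.2) ^ (-q) * w (uv.1 - uv.2) ^ (-q)) +
             (∑' uv : V d × V d,
                w (y - uv.1) ^ (-q) * w (x - uv.2) ^ (-q) * w (uv.1 - uv.2) ^ (-q))) := by
          rw [ENNReal.tsum_mul_left, ENNReal.tsum_add, ENNReal.tsum_add, ENNReal.tsum_add]
      _ ≤ K * W1 * K * W2 * (Sbar d q + Sbar d q + Sbar d q + Sbar d q) := by
          refine mul_le_mul' le_rfl ?_
          gcongr
          · exact chain_le_Sbar d q z ww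
          · exact chain_le_Sbar d q z x
          · exact chain_le_Sbar d q y ww
          · exact chain_le_Sbar d q y x
      _ = K * W1 * K * W2 * (4 * Sbar d q) := by
          congr 1
          rw [show (4:ℝ≥0∞) = 1 + 1 + 1 + 1 by norm_num]
          ring
  calc Hdiag d q z ww x y ≤ K * W1 * K * W2 * (4 * Sbar d q) := hmain
    _ = ENNReal.ofReal (4 * 2 ^ q * 2 ^ q) * Sbar d q * (W1 * W2) := by
        rw [ENNReal.ofReal_mul (by positivity : (0:ℝ) ≤ 4 * 2 ^ q),
          ENNReal.ofReal_mul (by norm_num : (0:ℝ) ≤ 4), ENNReal.ofReal_ofNat, ← hK]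
        ring
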